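/- There is a universal constant a > 0 such that the following holds. Let X be a finite multiset of size n over a finite entity set E with |E| ≥ 2, and suppose X is η-balanced, i.e. prob(e) = freq(e)/n ≥ η for every e ∈ E. Let W = (v₁,…,v_m) be drawn i.i.d. uniformly from X. Define p̂(e) = |{i : v_i = e}|/m for every entity e occurring in W, and p̂(e) = min_{w ∈ W} p̂(w) for entities not occurring in W; let P be the probability distribution on E with P(e) proportional to prob(e)/p̂(e). For every ε, δ ∈ (0,1), if m ≥ (a/(ε²η²))·(log|E|·log(log|E|/(εη)) + log(1/δ)), then with probability at least 1 − δ over the choice of W, the total variation distance between P and the uniform distribution on E is at most ε. -/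

import Mathlib

open scoped BigOperators Classical

/-- The frequency estimates of Algorithm 4 (probability estimates for balanced datasets):
for an entity `e` occurring in the sample `W`, `pHat W e` is its empirical frequency in
`W`; for an entity not occurring in `W`, it is the minimum empirical frequency over the
entities occurring in `W`. -/
noncomputable def pHat {E : Type*} [DecidableEq E] {m : ℕ} (W : Fin m → E) (e : E) : ℝ :=
  if ∃ i, W i = e then
    ((Finset.univ.filter fun i => W i = e).card : ℝ) / m
  else
    sInf {x : ℝ | ∃ i : Fin m,
      x = ((Finset.univ.filter fun i' => W i' = W i).card : ℝ) / m}

set_option maxHeartbeats 1000000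


private lemma aux_sum_prod {E : Type} [Fintype E] (f : E → ℝ) (m : ℕ) :
    ∑ W : Fin m → E, ∏ i, f (W i) = (∑ e, f e) ^ m := by
  induction m with
  | zero => simp
  | succ k ih =>
    rw [pow_succ, ← ih, ← (Fin.consEquiv (fun _ : Fin (k+1) => E)).sum_comp
      (fun W => ∏ i, f (W i))]
    rw [Fintype.sum_prod_type]
    simp only [Fin.consEquiv_apply, Fin.prod_univ_succ, Fin.cons_zero, Fin.cons_succ]
    rw [Finset.sum_comm]
    simp [Finset.sum_mul, Finset.mul_sum, mul_comm]

private lemma aux_cnt (E : Type) [Fintype E] [DecidableEq E] {m : ℕ} (W : Fin m → E) (e : E) :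
    (((Finset.univ.filter fun i => W i = e).card : ℝ)) =
      ∑ i : Fin m, if W i = e then (1:ℝ) else 0 := by
  rw [Finset.card_filter]
  push_cast
  rfl

private lemma aux_mgf {E : Type} [Fintype E] [DecidableEq E] (q : E → ℝ) (e : E) (m : ℕ) (c : ℝ) :
    ∑ W : Fin m → E, (∏ i, q (W i)) *
        Real.exp (c * ((Finset.univ.filter fun i => W i = e).card : ℝ))
      = (∑ e', q e' * Real.exp (c * if e' = e then (1:ℝ) else 0)) ^ m := by
  rw [← aux_sum_prod]
  refine Finset.sum_congr rfl fun W _ => ?_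
  rw [aux_cnt, Finset.mul_sum, Real.exp_sum, ← Finset.prod_mul_distrib]

private lemma aux_exp_quad {c : ℝ} (hc : |c| ≤ 1) : Real.exp c ≤ 1 + c + c ^ 2 := by
  have h := Real.exp_bound hc (n := 2) (by norm_num)
  have h2 : ∑ m ∈ Finset.range 2, c ^ m / (m.factorial : ℝ) = 1 + c := by
    norm_num [Finset.sum_range_succ]
  rw [h2] at h
  have h3 := (abs_le.1 h).2
  have hsq : |c| ^ 2 = c ^ 2 := sq_abs c
  norm_num at h3
  nlinarith [h3]

private lemma aux_tail {E : Type} [Fintype E] [DecidableEq E] (q : E → ℝ)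
    (hq0 : ∀ e, 0 ≤ q e) (hsum : ∑ e, q e = 1) (e : E) (m : ℕ) (t : ℝ)
    (ht : 0 < t) (hte : t ≤ q e) (s : ℝ) (hs : s = 1 ∨ s = -1) :
    ∑ W ∈ Finset.univ.filter (fun W : Fin m → E =>
        (m : ℝ) * t ≤ s * (((Finset.univ.filter fun i => W i = e).card : ℝ) - m * q e)),
      ∏ i, q (W i) ≤ Real.exp (-((m : ℝ) * t ^ 2) / 4) := by
  have hqe0 : 0 < q e := lt_of_lt_of_le ht hte
  have hqe1 : q e ≤ 1 := by
    rw [← hsum]; exact Finset.single_le_sum (fun e _ => hq0 e) (Finset.mem_univ e)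
  set l : ℝ := t / (2 * q e) with hl
  have hl0 : 0 < l := by positivity
  have hlt : 2 * q e * l = t := by rw [hl]; field_simp
  have hl1 : l ≤ 1 := by
    rw [hl, div_le_one (by positivity)]; linarith
  set c : ℝ := s * l with hc
  have hc2 : c ^ 2 = l ^ 2 := by rcases hs with h | h <;> (rw [hc, h]; ring)
  have hcabs : |c| ≤ 1 := by
    have : |c| = l := by
      rcases hs with h | h
      · rw [hc, h, one_mul, abs_of_pos hl0]
      · rw [hc, h, neg_one_mul, abs_neg, abs_of_pos hl0]
    rw [this]; exact hl1
  set B : ℝ := - (c * (m * q e)) - l * (m * t) with hB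
  -- step 1: indicator bound
  have step1 : ∑ W ∈ Finset.univ.filter (fun W : Fin m → E =>
        (m : ℝ) * t ≤ s * (((Finset.univ.filter fun i => W i = e).card : ℝ) - m * q e)),
      ∏ i, q (W i)
      ≤ ∑ W : Fin m → E, ((∏ i, q (W i)) *
          Real.exp (c * ((Finset.univ.filter fun i => W i = e).card : ℝ))) * Real.exp B := by
    rw [← Finset.sum_filter_add_sum_filter_not Finset.univ (fun W : Fin m → E =>
        (m : ℝ) * t ≤ s * (((Finset.univ.filter fun i => W i = e).card : ℝ) - m * q e))]
    have h1 : ∀ W ∈ Finset.univ.filter (fun W : Fin m → E =>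
        (m : ℝ) * t ≤ s * (((Finset.univ.filter fun i => W i = e).card : ℝ) - m * q e)),
        (∏ i, q (W i)) ≤ ((∏ i, q (W i)) *
          Real.exp (c * ((Finset.univ.filter fun i => W i = e).card : ℝ))) * Real.exp B := by
      intro W hW
      have hW' := (Finset.mem_filter.1 hW).2
      have hprod : 0 ≤ ∏ i, q (W i) :=
        Finset.prod_nonneg (fun i _ => hq0 (W i))
      have hexp : (1:ℝ) ≤ Real.exp (c * ((Finset.univ.filter fun i => W i = e).card : ℝ))
          * Real.exp B := by
        rw [← Real.exp_add, ← Real.exp_zero]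
        apply Real.exp_le_exp.2
        have key : c * ((Finset.univ.filter fun i => W i = e).card : ℝ) + B
            = l * (s * (((Finset.univ.filter fun i => W i = e).card : ℝ) - m * q e))
              - l * (m * t) := by
          rcases hs with h | h <;> (rw [hB, hc, h]; ring)
        rw [key]
        nlinarith
      calc (∏ i, q (W i)) = (∏ i, q (W i)) * 1 := by ring
        _ ≤ (∏ i, q (W i)) * (Real.exp (c * ((Finset.univ.filter fun i => W i = e).card : ℝ))
              * Real.exp B) := by
            exact mul_le_mul_of_nonneg_left hexp hprod
        _ = _ := by ring
    calc _ ≤ ∑ W ∈ Finset.univ.filter (fun W : Fin m → E =>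
        (m : ℝ) * t ≤ s * (((Finset.univ.filter fun i => W i = e).card : ℝ) - m * q e)),
          ((∏ i, q (W i)) *
          Real.exp (c * ((Finset.univ.filter fun i => W i = e).card : ℝ))) * Real.exp B :=
          Finset.sum_le_sum h1
      _ ≤ _ := by
          apply le_add_of_nonneg_right
          apply Finset.sum_nonneg
          intro W _
          have hprod : 0 ≤ ∏ i, q (W i) := Finset.prod_nonneg (fun i _ => hq0 (W i))
          positivity
  -- step 2: compute the MGF
  have hinner : ∑ e', q e' * Real.exp (c * if e' = e then (1:ℝ) else 0)
      = 1 - q e + q e * Real.exp c := by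
    have : ∀ e' : E, q e' * Real.exp (c * if e' = e then (1:ℝ) else 0)
        = q e' + (if e' = e then q e * (Real.exp c - 1) else 0) := by
      intro e'
      by_cases h : e' = e <;> simp [h] <;> ring
    rw [Finset.sum_congr rfl (fun e' _ => this e'), Finset.sum_add_distrib, hsum,
      Finset.sum_ite_eq' Finset.univ e (fun _ => q e * (Real.exp c - 1))]
    simp
    ring
  have step2 : ∑ W : Fin m → E, ((∏ i, q (W i)) *
          Real.exp (c * ((Finset.univ.filter fun i => W i = e).card : ℝ))) * Real.exp B
      = (1 - q e + q e * Real.exp c) ^ m * Real.exp B := by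
    rw [← Finset.sum_mul, aux_mgf, hinner]
  -- step 3: bound
  have hbase0 : (0:ℝ) ≤ 1 - q e + q e * Real.exp c := by
    nlinarith [Real.exp_pos c]
  have hbase : 1 - q e + q e * Real.exp c ≤ Real.exp (q e * (Real.exp c - 1)) := by
    nlinarith [Real.add_one_le_exp (q e * (Real.exp c - 1))]
  have step3 : (1 - q e + q e * Real.exp c) ^ m * Real.exp B
      ≤ Real.exp (-((m : ℝ) * t ^ 2) / 4) := by
    have hpow : (1 - q e + q e * Real.exp c) ^ m
        ≤ Real.exp ((m : ℝ) * (q e * (Real.exp c - 1))) := by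
      calc (1 - q e + q e * Real.exp c) ^ m
          ≤ (Real.exp (q e * (Real.exp c - 1))) ^ m := pow_le_pow_left₀ hbase0 hbase m
        _ = Real.exp ((m : ℝ) * (q e * (Real.exp c - 1))) := by
            rw [← Real.exp_nat_mul]
    calc (1 - q e + q e * Real.exp c) ^ m * Real.exp B
        ≤ Real.exp ((m : ℝ) * (q e * (Real.exp c - 1))) * Real.exp B := by
          exact mul_le_mul_of_nonneg_right hpow (Real.exp_pos B).le
      _ = Real.exp ((m : ℝ) * (q e * (Real.exp c - 1)) + B) := (Real.exp_add _ _).symm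
      _ ≤ Real.exp (-((m : ℝ) * t ^ 2) / 4) := by
          apply Real.exp_le_exp.2
          have hquad := aux_exp_quad hcabs
          have hm0 : (0:ℝ) ≤ (m : ℝ) := Nat.cast_nonneg m
          -- m*(qe*(exp c - 1)) - c*(m*qe) - l*(m*t) ≤ -(m*t^2)/4
          rw [hB]
          have key1 : (m : ℝ) * (q e * (Real.exp c - 1)) + (- (c * (m * q e)) - l * (m * t))
              ≤ (m : ℝ) * (q e * l ^ 2) - l * ((m:ℝ) * t) := by
            have h1 : Real.exp c - 1 - c ≤ l ^ 2 := by nlinarith [hquad]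
            nlinarith [mul_nonneg hm0 hqe0.le, mul_le_mul_of_nonneg_left h1
              (mul_nonneg hm0 hqe0.le)]
          have key2 : (m : ℝ) * (q e * l ^ 2) - l * ((m:ℝ) * t)
              ≤ -((m : ℝ) * t ^ 2) / 4 := by
            have h2 : (m : ℝ) * (q e * l ^ 2) - l * ((m:ℝ) * t) = -((m:ℝ) * (q e * l^2)) := by
              rw [← hlt]; ring
            have h3 : ((m:ℝ) * t ^ 2) / 4 = (m:ℝ) * ((q e)^2 * l^2) := by rw [← hlt]; ring
            have h5 : (q e)^2 * l^2 ≤ q e * l^2 :=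
              mul_le_mul_of_nonneg_right (by nlinarith) (sq_nonneg l)
            have h6 := mul_le_mul_of_nonneg_left h5 hm0
            linarith
          linarith
  calc _ ≤ _ := step1
    _ = _ := step2
    _ ≤ _ := step3

private lemma aux_frac1 {b K : ℝ} (hb0 : 0 < b) (hb1 : b < 1) (hK : 0 < K) :
    (1+b)/((1-b)*K) - 1/K = 2*b/((1-b)*K) := by
  have h2 : (1:ℝ)-b ≠ 0 := ne_of_gt (by linarith)
  have h3 : K ≠ 0 := ne_of_gt hK
  field_simp
  ring

private lemma aux_frac2 {b K : ℝ} (hb0 : 0 < b) (hb1 : b < 1) (hK : 0 < K) :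
    (1-b)/((1+b)*K) = 1/K - 2*b/((1+b)*K) := by
  have h2 : (1:ℝ)+b ≠ 0 := ne_of_gt (by linarith)
  have h3 : K ≠ 0 := ne_of_gt hK
  field_simp
  ring

private lemma aux_frac3 {b K : ℝ} (hb0 : 0 < b) (hb1 : b < 1) (hK : 0 < K) :
    (1/2:ℝ)*(K*(2*b/((1-b)*K))) = b/(1-b) := by
  have h2 : (1:ℝ)-b ≠ 0 := ne_of_gt (by linarith)
  have h3 : K ≠ 0 := ne_of_gt hK
  field_simp

private lemma aux_frac4 {b K : ℝ} (hb0 : 0 < b) (hb1 : b < 1) (hK : 0 < K) :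
    2*b/((1+b)*K) ≤ 2*b/((1-b)*K) := by
  rw [div_le_div_iff₀ (by nlinarith) (by nlinarith)]
  nlinarith [mul_nonneg (mul_nonneg hb0.le hb0.le) hK.le]

private lemma aux_tv {E : Type} [Fintype E] [DecidableEq E] (q : E → ℝ) (η ε : ℝ)
    (hK : 2 ≤ Fintype.card E) (hη : 0 < η) (hq : ∀ e, η ≤ q e)
    (hε : 0 < ε) (hε1 : ε < 1) {m : ℕ} (hm : 0 < m) (W : Fin m → E)
    (hW : ∀ e, |((Finset.univ.filter fun i => W i = e).card : ℝ)/m - q e| ≤ ε * η / 3) :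
    (1/2 : ℝ) * ∑ e, |(q e / pHat W e) / (∑ e', q e' / pHat W e') -
        1/(Fintype.card E : ℝ)| ≤ ε := by
  set β : ℝ := ε / 3 with hβ
  have hβ0 : 0 < β := by positivity
  have hβ1 : β < 1 := by rw [hβ]; linarith
  set K : ℝ := (Fintype.card E : ℝ) with hKdef
  have hK2 : (2:ℝ) ≤ K := by rw [hKdef]; exact_mod_cast hK
  have hK0 : 0 < K := by linarith
  set p : E → ℝ := fun e => ((Finset.univ.filter fun i => W i = e).card : ℝ)/m with hp
  have hm0 : (0:ℝ) < m := by exact_mod_cast hm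
  have hqpos : ∀ e, 0 < q e := fun e => lt_of_lt_of_le hη (hq e)
  have hplow : ∀ e, (1 - β) * q e ≤ p e := by
    intro e
    have h1 := (abs_le.1 (hW e)).1
    have h2 : ε * η / 3 ≤ β * q e := by
      rw [hβ]; nlinarith [hq e]
    nlinarith
  have hphigh : ∀ e, p e ≤ (1 + β) * q e := by
    intro e
    have h1 := (abs_le.1 (hW e)).2
    have h2 : ε * η / 3 ≤ β * q e := by
      rw [hβ]; nlinarith [hq e]
    nlinarith
  have hppos : ∀ e, 0 < p e := by
    intro e
    have := hplow e
    nlinarith [hqpos e]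
  have hpHat : ∀ e, pHat W e = p e := by
    intro e
    have hcard : 0 < (Finset.univ.filter fun i => W i = e).card := by
      by_contra h
      push_neg at h
      have : (Finset.univ.filter fun i => W i = e).card = 0 := by omega
      have hz : p e = 0 := by rw [hp]; simp [this]
      exact absurd hz (ne_of_gt (hppos e))
    obtain ⟨i, hi⟩ := Finset.card_pos.1 hcard
    have hi' : W i = e := (Finset.mem_filter.1 hi).2
    rw [pHat, if_pos ⟨i, hi'⟩]
  simp only [hpHat]
  set r : E → ℝ := fun e => q e / p e with hr
  have hrlow : ∀ e, 1/(1+β) ≤ r e := by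
    intro e
    rw [hr]
    rw [div_le_div_iff₀ (by linarith) (hppos e)]
    nlinarith [hphigh e, hqpos e]
  have hrhigh : ∀ e, r e ≤ 1/(1-β) := by
    intro e
    rw [hr]
    rw [div_le_div_iff₀ (hppos e) (by linarith)]
    nlinarith [hplow e, hqpos e]
  set S : ℝ := ∑ e', r e' with hS
  have hSlow : K/(1+β) ≤ S := by
    rw [hS, hKdef]
    calc (Fintype.card E : ℝ)/(1+β) = ∑ _e' : E, (1:ℝ)/(1+β) := by
          rw [Finset.sum_const, Finset.card_univ, nsmul_eq_mul]; ring
      _ ≤ ∑ e', r e' := Finset.sum_le_sum (fun e' _ => hrlow e')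
  have hShigh : S ≤ K/(1-β) := by
    rw [hS, hKdef]
    calc ∑ e', r e' ≤ ∑ _e' : E, (1:ℝ)/(1-β) := Finset.sum_le_sum (fun e' _ => hrhigh e')
      _ = (Fintype.card E : ℝ)/(1-β) := by
          rw [Finset.sum_const, Finset.card_univ, nsmul_eq_mul]; ring
  have hSpos : 0 < S := lt_of_lt_of_le (by positivity) hSlow
  have hbound : ∀ e, |r e / S - 1/K| ≤ 2*β/((1-β)*K) := by
    intro e
    have hup : r e / S ≤ (1+β)/((1-β)*K) := by
      calc r e / S ≤ (1/(1-β))/(K/(1+β)) :=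
            div_le_div₀ (div_nonneg zero_le_one (by linarith)) (hrhigh e) (by positivity) hSlow
        _ = (1+β)/((1-β)*K) := by
            field_simp
    have hlo : (1-β)/((1+β)*K) ≤ r e / S := by
      calc (1-β)/((1+β)*K) = (1/(1+β))/(K/(1-β)) := by
            have h2 : (1:ℝ)-β ≠ 0 := ne_of_gt (by linarith)
            have h3 : K ≠ 0 := ne_of_gt hK0
            field_simp
        _ ≤ r e / S := div_le_div₀ (div_nonneg (hqpos e).le (hppos e).le)
            (hrlow e) hSpos hShigh
    rw [abs_le]
    constructor
    · have heq := aux_frac2 hβ0 hβ1 hK0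
      have hle := aux_frac4 hβ0 hβ1 hK0
      linarith
    · have heq := aux_frac1 hβ0 hβ1 hK0
      linarith
  calc (1/2 : ℝ) * ∑ e, |r e / S - 1/K|
      ≤ (1/2) * ∑ _e : E, 2*β/((1-β)*K) := by
        have := Finset.sum_le_sum (fun e (_ : e ∈ Finset.univ) => hbound e)
        linarith
    _ = (1/2) * (K * (2*β/((1-β)*K))) := by
        rw [Finset.sum_const, Finset.card_univ, nsmul_eq_mul, hKdef]
    _ = β/(1-β) := aux_frac3 hβ0 hβ1 hK0
    _ ≤ ε := by
        rw [div_le_iff₀ (by linarith)]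
        rw [hβ]; nlinarith

private lemma aux_numeric (K : ℕ) (η ε δ : ℝ) (hK : 2 ≤ K) (hη : 0 < η) (hη2 : η ≤ 1/2)
    (hε : 0 < ε) (hε1 : ε < 1) (hδ : 0 < δ) (hδ1 : δ < 1) (m : ℕ)
    (hm : (300 / (ε^2*η^2)) * (Real.log K * Real.log (Real.log K / (ε*η)) +
      Real.log (1/δ)) ≤ (m:ℝ)) :
    0 < m ∧ 2*(K:ℝ)*Real.exp (-((m:ℝ)*(ε*η/3)^2)/4) ≤ δ := by
  set L : ℝ := Real.log K with hLdef
  set D : ℝ := Real.log (1/δ) with hDdef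
  set B : ℝ := L * Real.log (L / (ε*η)) + D with hBdef
  have hK2 : (2:ℝ) ≤ (K:ℝ) := by exact_mod_cast hK
  have hlog2 : (0.6931471803:ℝ) < Real.log 2 := Real.log_two_gt_d9
  have hL : Real.log 2 ≤ L := Real.log_le_log (by norm_num) hK2
  have hL0 : 0 < L := by linarith
  have hεη0 : 0 < ε*η := by positivity
  have hεη : ε*η ≤ 1/2 := by nlinarith
  have hstep : (4:ℝ)/3 ≤ L/(ε*η) := by
    have h2L : 2*L ≤ L/(ε*η) := by
      rw [le_div_iff₀ hεη0]; nlinarith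
    linarith
  have hexp14 : Real.exp (1/4) ≤ 4/3 := by
    have h := Real.add_one_le_exp (-(1/4) : ℝ)
    have hmul : Real.exp (1/4) * Real.exp (-(1/4)) = 1 := by
      rw [← Real.exp_add]; norm_num
    nlinarith [Real.exp_pos (1/4 : ℝ)]
  have hlogL : (1:ℝ)/4 ≤ Real.log (L/(ε*η)) := by
    rw [Real.le_log_iff_exp_le (by positivity)]
    calc Real.exp (1/4) ≤ 4/3 := hexp14
      _ ≤ L/(ε*η) := hstep
  have hD : 0 < D := by
    rw [hDdef]
    apply Real.log_pos
    rw [lt_div_iff₀ hδ]; linarith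
  have hB : L/4 + D ≤ B := by
    rw [hBdef]
    have := mul_le_mul_of_nonneg_left hlogL hL0.le
    linarith
  have hm0R : (0:ℝ) < (m:ℝ) := by
    have hBpos : (0:ℝ) < B := lt_of_lt_of_le (add_pos (by linarith : (0:ℝ) < L/4) hD) hB
    have h1 : (0:ℝ) < (300 / (ε^2*η^2)) * B := mul_pos (by positivity) hBpos
    linarith
  have hm0 : 0 < m := by exact_mod_cast hm0R
  refine ⟨hm0, ?_⟩
  have key : Real.log 2 + L + D ≤ (m:ℝ)*(ε*η/3)^2/4 := by
    have h1 : (300/(ε^2*η^2))*B*(ε^2*η^2/36) = (300/36)*B := by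
      field_simp
    have h2 := mul_le_mul_of_nonneg_right hm (by positivity : (0:ℝ) ≤ ε^2*η^2/36)
    have h3 : (m:ℝ)*(ε*η/3)^2/4 = (m:ℝ)*(ε^2*η^2/36) := by ring
    rw [h3]
    linarith
  have hexp : Real.exp (-((m:ℝ)*(ε*η/3)^2)/4) ≤ Real.exp (-(Real.log 2 + L + D)) := by
    apply Real.exp_le_exp.2
    linarith
  have hval : Real.exp (-(Real.log 2 + L + D)) = 1/2 * (1/(K:ℝ)) * δ := by
    rw [show -(Real.log 2 + L + D) = (-Real.log 2) + ((-L) + (-D)) by ring,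
      Real.exp_add, Real.exp_add, Real.exp_neg, Real.exp_neg, Real.exp_neg,
      Real.exp_log (by norm_num : (0:ℝ) < 2),
      hLdef, Real.exp_log (by positivity : (0:ℝ) < (K:ℝ)),
      hDdef, Real.exp_log (by positivity : (0:ℝ) < 1/δ)]
    rw [one_div, inv_inv]
    ring
  have hKpos : (0:ℝ) < (K:ℝ) := by linarith
  calc 2*(K:ℝ)*Real.exp (-((m:ℝ)*(ε*η/3)^2)/4)
      ≤ 2*(K:ℝ)*(1/2 * (1/(K:ℝ)) * δ) := by
        rw [← hval]
        exact mul_le_mul_of_nonneg_left hexp (by positivity)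
    _ = δ := by field_simp

private lemma aux_main {E : Type} [Fintype E] [DecidableEq E] (q : E → ℝ) (η ε δ : ℝ)
    (hK : 2 ≤ Fintype.card E) (hq0 : ∀ e, 0 ≤ q e) (hsum : ∑ e, q e = 1)
    (hη : 0 < η) (hq : ∀ e, η ≤ q e) (hε : 0 < ε) (hε1 : ε < 1) (hδ1 : δ < 1)
    (m : ℕ) (hm : 0 < m)
    (hδb : 2*(Fintype.card E : ℝ)*Real.exp (-((m:ℝ)*(ε*η/3)^2)/4) ≤ δ) :
    1 - δ ≤ ∑ W ∈ Finset.univ.filter (fun W : Fin m → E =>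
        (1/2 : ℝ) * ∑ e, |(q e / pHat W e) / (∑ e', q e' / pHat W e') -
          1/(Fintype.card E : ℝ)| ≤ ε),
      ∏ i, q (W i) := by
  set t : ℝ := ε * η / 3 with ht
  have ht0 : 0 < t := by positivity
  set cnt : (Fin m → E) → E → ℝ :=
    fun W e => ((Finset.univ.filter fun i => W i = e).card : ℝ) with hcnt
  set G : (Fin m → E) → Prop := fun W => ∀ e, |cnt W e / m - q e| ≤ t with hG
  have hμ0 : ∀ W : Fin m → E, 0 ≤ ∏ i, q (W i) :=
    fun W => Finset.prod_nonneg (fun i _ => hq0 (W i))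
  have hm0 : (0:ℝ) < m := by exact_mod_cast hm
  -- good ⊆ TV event
  have hsubset : Finset.univ.filter G ⊆ Finset.univ.filter (fun W : Fin m → E =>
      (1/2 : ℝ) * ∑ e, |(q e / pHat W e) / (∑ e', q e' / pHat W e') -
        1/(Fintype.card E : ℝ)| ≤ ε) := by
    intro W hW
    rw [Finset.mem_filter] at hW ⊢
    exact ⟨hW.1, aux_tv q η ε hK hη hq hε hε1 hm W hW.2⟩
  have step1 : ∑ W ∈ Finset.univ.filter G, ∏ i, q (W i)
      ≤ ∑ W ∈ Finset.univ.filter (fun W : Fin m → E =>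
        (1/2 : ℝ) * ∑ e, |(q e / pHat W e) / (∑ e', q e' / pHat W e') -
          1/(Fintype.card E : ℝ)| ≤ ε), ∏ i, q (W i) :=
    Finset.sum_le_sum_of_subset_of_nonneg hsubset (fun W _ _ => hμ0 W)
  -- total mass is 1
  have htotal : ∑ W : Fin m → E, ∏ i, q (W i) = 1 := by
    rw [aux_sum_prod, hsum, one_pow]
  -- union bound
  have hte : ∀ e : E, t ≤ q e := by
    intro e
    have := hq e
    rw [ht]; nlinarith
  have hbad : ∑ W ∈ Finset.univ.filter (fun W => ¬ G W), ∏ i, q (W i) ≤ δ := by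
    have hpt : ∀ W : Fin m → E, ¬ G W → ∃ e,
        ((m:ℝ) * t ≤ 1 * (cnt W e - m * q e)) ∨
        ((m:ℝ) * t ≤ (-1) * (cnt W e - m * q e)) := by
      intro W hGW
      obtain ⟨e, he⟩ : ∃ e, t < |cnt W e / m - q e| := by
        simpa [hG, not_forall, not_le] using hGW
      refine ⟨e, ?_⟩
      have hid : cnt W e - m * q e = m * (cnt W e / m - q e) := by
        field_simp
      rcases lt_abs.1 he with h | h
      · left
        rw [one_mul, hid]
        exact mul_le_mul_of_nonneg_left h.le hm0.le
      · right
        calc (m:ℝ) * t ≤ m * (-(cnt W e / m - q e)) :=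
              mul_le_mul_of_nonneg_left h.le hm0.le
          _ = (-1) * (cnt W e - m * q e) := by rw [hid]; ring
    set F : E → (Fin m → E) → ℝ := fun e W =>
      (if (m:ℝ) * t ≤ 1 * (cnt W e - m * q e) then ∏ i, q (W i) else 0) +
      (if (m:ℝ) * t ≤ (-1) * (cnt W e - m * q e) then ∏ i, q (W i) else 0) with hF
    have hF0 : ∀ e W, 0 ≤ F e W := by
      intro e W
      rw [hF]
      have := hμ0 W
      dsimp only
      split_ifs <;> simp <;> linarith
    have h1 : ∑ W ∈ Finset.univ.filter (fun W => ¬ G W), ∏ i, q (W i)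
        ≤ ∑ W : Fin m → E, ∑ e, F e W := by
      calc ∑ W ∈ Finset.univ.filter (fun W => ¬ G W), ∏ i, q (W i)
          ≤ ∑ W ∈ Finset.univ.filter (fun W => ¬ G W), ∑ e, F e W := by
            apply Finset.sum_le_sum
            intro W hW
            obtain ⟨e, he⟩ := hpt W (Finset.mem_filter.1 hW).2
            have hterm : ∏ i, q (W i) ≤ F e W := by
              rw [hF]
              dsimp only
              rcases he with h | h
              · rw [if_pos h]
                have h2 : (0:ℝ) ≤ if (m:ℝ) * t ≤ (-1) * (cnt W e - m * q e)
                    then ∏ i, q (W i) else 0 := by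
                  split_ifs
                  exacts [hμ0 W, le_refl 0]
                linarith
              · rw [if_pos h]
                have h2 : (0:ℝ) ≤ if (m:ℝ) * t ≤ 1 * (cnt W e - m * q e)
                    then ∏ i, q (W i) else 0 := by
                  split_ifs
                  exacts [hμ0 W, le_refl 0]
                linarith
            calc ∏ i, q (W i) ≤ F e W := hterm
              _ ≤ ∑ e, F e W :=
                  Finset.single_le_sum (fun e _ => hF0 e W) (Finset.mem_univ e)
        _ ≤ ∑ W : Fin m → E, ∑ e, F e W := by
            apply Finset.sum_le_sum_of_subset_of_nonneg (Finset.filter_subset _ _)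
            intro W _ _
            exact Finset.sum_nonneg (fun e _ => hF0 e W)
    have h2 : ∑ W : Fin m → E, ∑ e, F e W
        ≤ (Fintype.card E : ℝ) * (2 * Real.exp (-((m:ℝ) * t ^ 2) / 4)) := by
      rw [Finset.sum_comm]
      calc ∑ e, ∑ W : Fin m → E, F e W
          ≤ ∑ _e : E, 2 * Real.exp (-((m:ℝ) * t ^ 2) / 4) := by
            apply Finset.sum_le_sum
            intro e _
            rw [hF]
            dsimp only
            rw [Finset.sum_add_distrib]
            have hup : ∑ W : Fin m → E,
                (if (m:ℝ) * t ≤ 1 * (cnt W e - m * q e) then ∏ i, q (W i) else 0)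
                ≤ Real.exp (-((m:ℝ) * t ^ 2) / 4) := by
              rw [← Finset.sum_filter]
              simpa only [hcnt] using
                aux_tail q hq0 hsum e m t ht0 (hte e) 1 (Or.inl rfl)
            have hdn : ∑ W : Fin m → E,
                (if (m:ℝ) * t ≤ (-1) * (cnt W e - m * q e) then ∏ i, q (W i) else 0)
                ≤ Real.exp (-((m:ℝ) * t ^ 2) / 4) := by
              rw [← Finset.sum_filter]
              simpa only [hcnt] using
                aux_tail q hq0 hsum e m t ht0 (hte e) (-1) (Or.inr rfl)
            linarith
        _ = (Fintype.card E : ℝ) * (2 * Real.exp (-((m:ℝ) * t ^ 2) / 4)) := by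
            rw [Finset.sum_const, Finset.card_univ, nsmul_eq_mul]
    calc ∑ W ∈ Finset.univ.filter (fun W => ¬ G W), ∏ i, q (W i)
        ≤ (Fintype.card E : ℝ) * (2 * Real.exp (-((m:ℝ) * t ^ 2) / 4)) :=
          le_trans h1 h2
      _ = 2*(Fintype.card E : ℝ)*Real.exp (-((m:ℝ)*(ε*η/3)^2)/4) := by
          rw [ht]; ring
      _ ≤ δ := hδb
  -- conclude
  have hgood : 1 - δ ≤ ∑ W ∈ Finset.univ.filter G, ∏ i, q (W i) := by
    have hpart := Finset.sum_filter_add_sum_filter_not Finset.univ G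
      (fun W : Fin m → E => ∏ i, q (W i))
    rw [htotal] at hpart
    linarith
  linarith [step1]

/-- Sampling for balanced datasets (Theorem 3.1). There is a universal
constant `a > 0` such that for every `η`-balanced dataset (given by `freq : E → ℕ` with
`∑ freq = n`), every `ε, δ ∈ (0,1)` and every sample size
`m ≥ (a/(ε²η²))·(log|E|·log(log|E|/(εη)) + log(1/δ))`: with probability at least `1 − δ`
over `m` i.i.d. uniform draws `W` from the dataset, the distribution `P` on `E` with
`P(e) ∝ prob(e)/pHat W e` is within total variation distance `ε` of the uniform
distribution on `E`. -/
theorem stmt_1 :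
    ∃ a : ℝ, 0 < a ∧
      ∀ (E : Type) [Fintype E] [DecidableEq E],
      ∀ (freq : E → ℕ) (n : ℕ) (η ε δ : ℝ),
        2 ≤ Fintype.card E →
        0 < n →
        (∑ e : E, freq e) = n →
        0 < η →
        (∀ e : E, η ≤ (freq e : ℝ) / n) →
        ε ∈ Set.Ioo (0:ℝ) 1 →
        δ ∈ Set.Ioo (0:ℝ) 1 →
        ∀ m : ℕ,
          (a / (ε ^ 2 * η ^ 2)) *
              (Real.log (Fintype.card E) *
                  Real.log (Real.log (Fintype.card E) / (ε * η)) +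
                Real.log (1 / δ)) ≤ (m : ℝ) →
          1 - δ ≤
            ∑ W ∈ Finset.univ.filter (fun W : Fin m → E =>
                (1 / 2 : ℝ) * ∑ e : E,
                    |((freq e : ℝ) / n / pHat W e) /
                        (∑ e' : E, (freq e' : ℝ) / n / pHat W e') -
                      1 / (Fintype.card E : ℝ)| ≤ ε),
              ∏ i, (freq (W i) : ℝ) / n := by
  classical
  refine ⟨300, by norm_num, ?_⟩
  intro E _ _ freq n η ε δ hK hn hsumfreq hη hbal hε hδ m hm
  have hn0 : (0:ℝ) < n := by exact_mod_cast hn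
  have hq0 : ∀ e : E, 0 ≤ (freq e : ℝ) / n := fun e => by positivity
  have hsum : ∑ e : E, (freq e : ℝ) / n = 1 := by
    rw [← Finset.sum_div]
    have hcast : ∑ e : E, ((freq e : ℝ)) = (n : ℝ) := by exact_mod_cast hsumfreq
    rw [hcast]
    field_simp
  have hK2 : (2:ℝ) ≤ (Fintype.card E : ℝ) := by exact_mod_cast hK
  have hη2 : η ≤ 1/2 := by
    have h1 : ∑ _e : E, η ≤ ∑ e : E, (freq e : ℝ) / n :=
      Finset.sum_le_sum (fun e _ => hbal e)
    rw [hsum, Finset.sum_const, Finset.card_univ, nsmul_eq_mul] at h1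
    nlinarith
  obtain ⟨hm0, hδb⟩ := aux_numeric (Fintype.card E) η ε δ hK hη hη2 hε.1 hε.2
    hδ.1 hδ.2 m hm
  exact aux_main (fun e => (freq e : ℝ) / n) η ε δ hK hq0 hsum hη hbal
    hε.1 hε.2 hδ.2 m hm0 hδb
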